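/- Theorem (reduction by symmetry): the optimal value of the full dual LP — maximize t over t ∈ ℝ, λ ∈ ℝ^{m_I} with λ_i ≥ 0, μ ∈ ℝ^{m_J}, α ∈ ℝ^{(δ_1−1)+⋯+(δ_n−1)} subject to t ≤ q(v) + Σ_{i∈I} λ_i(a_i'·v − b_i) + Σ_{j∈J} μ_j(c_j'·v − d_j) + Σ_{k=1}^{n} Σ_{l=1}^{δ_k−1} α_{k,l}(e_{k,l}·v) for all v ∈ V' — equals the optimal value d* of the reduced dual LP (D̄). -/

import Mathlib

open Finset

/-- The normalized elementary symmetric polynomial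
`B_{l,δ}(z) = binom(δ,l)⁻¹ ∑_{1≤σ₁<⋯<σ_l≤δ} z_{σ₁}⋯z_{σ_l}`. -/
noncomputable def normEsymm (δ l : ℕ) (z : Fin δ → ℝ) : ℝ :=
  ((δ.choose l : ℝ))⁻¹ * ∑ s ∈ Finset.powersetCard l (Finset.univ : Finset (Fin δ)),
    ∏ i ∈ s, z i

/-- The polynomial `p(x) = ∑_{l ∈ Δ} c_l x₁^{l₁}⋯x_n^{l_n}` with coefficients `c`,
where `Δ = {0,…,δ₁} × ⋯ × {0,…,δ_n}`. -/
noncomputable def polyOf {n : ℕ} {δ : Fin n → ℕ} (c : (∀ k, Fin (δ k + 1)) → ℝ)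
    (x : Fin n → ℝ) : ℝ :=
  ∑ l : ∀ k, Fin (δ k + 1), c l * ∏ k, x k ^ (l k : ℕ)

/-- The blossom `q(z) = ∑_{l ∈ Δ} c_l ∏_k B_{l_k,δ_k}(z_{k,1},…,z_{k,δ_k})` of the
polynomial with coefficients `c`. -/
noncomputable def blossomOf {n : ℕ} {δ : Fin n → ℕ} (c : (∀ k, Fin (δ k + 1)) → ℝ)
    (z : ∀ k, Fin (δ k) → ℝ) : ℝ :=
  ∑ l : ∀ k, Fin (δ k + 1), c l * ∏ k, normEsymm (δ k) (l k) (z k)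

/-- A function of the blocked variables `z = (z_{k,i})` is multi-affine if it is affine
(degree at most 1) in each single argument `z_{k,i}`. -/
def MultiAffineB {n : ℕ} (δ : Fin n → ℕ) (q : (∀ k, Fin (δ k) → ℝ) → ℝ) : Prop :=
  ∀ (k : Fin n) (i : Fin (δ k)) (z : ∀ k, Fin (δ k) → ℝ) (s t θ : ℝ),
    q (Function.update z k (Function.update (z k) i (θ * s + (1 - θ) * t)))
      = θ * q (Function.update z k (Function.update (z k) i s))
        + (1 - θ) * q (Function.update z k (Function.update (z k) i t))

/-- `z ≅ z'` : each block of `z` is a permutation of the corresponding block of `z'`. -/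
def BlockRel {n : ℕ} (δ : Fin n → ℕ) (z z' : ∀ k, Fin (δ k) → ℝ) : Prop :=
  ∀ k, ∃ π : Equiv.Perm (Fin (δ k)), ∀ i, z k i = z' k (π i)


/-- Euclidean dot product on `ℝ^n`. -/
def dotp {n : ℕ} (u x : Fin n → ℝ) : ℝ := ∑ k, u k * x k

/-- The lifted linear form: for `w ∈ ℝ^n`, `w' · z = ∑_k ∑_i (w k / δ k) * z k i`. -/
noncomputable def aLift {n : ℕ} (δ : Fin n → ℕ) (w : Fin n → ℝ)
    (z : ∀ k, Fin (δ k) → ℝ) : ℝ :=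
  ∑ k, ∑ i : Fin (δ k), (w k / (δ k : ℝ)) * z k i

/-- The canonical representative of the equivalence class of vertices of `R'` whose
`k`-th block has exactly `ℓ k` coordinates equal to `hi k`. -/
noncomputable def vrep {n : ℕ} (δ : Fin n → ℕ) (lo hi : Fin n → ℝ)
    (ℓ : ∀ k, Fin (δ k + 1)) (k : Fin n) (i : Fin (δ k)) : ℝ :=
  if (i : ℕ) < (ℓ k : ℕ) then hi k else lo k


lemma aLift_blockRel {n : ℕ} (δ : Fin n → ℕ) (w : Fin n → ℝ)
    {z z' : ∀ k, Fin (δ k) → ℝ} (h : BlockRel δ z z') :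
    aLift δ w z = aLift δ w z' := by
  unfold aLift
  refine Finset.sum_congr rfl fun k _ => ?_
  obtain ⟨π, hπ⟩ := h k
  calc ∑ i, (w k / (δ k : ℝ)) * z k i
      = ∑ i, (w k / (δ k : ℝ)) * z' k (π i) :=
        Finset.sum_congr rfl fun i _ => by rw [hπ]
    _ = ∑ i, (w k / (δ k : ℝ)) * z' k i :=
        Equiv.sum_comp π (fun i => (w k / (δ k : ℝ)) * z' k i)

lemma card_lt_subtype (d l : ℕ) (h : l ≤ d) :
    Fintype.card {i : Fin d // (i : ℕ) < l} = l := by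
  have e : {i : Fin d // (i : ℕ) < l} ≃ Fin l :=
    { toFun := fun i => ⟨i.1.1, i.2⟩
      invFun := fun j => ⟨⟨j.1, lt_of_lt_of_le j.2 h⟩, j.2⟩
      left_inv := fun i => Subtype.ext (Fin.ext rfl)
      right_inv := fun j => rfl }
  simp [Fintype.card_congr e]

lemma sum_perm_diff_zero {n : ℕ} (δ : Fin n → ℕ) (w : ∀ k, Fin (δ k) → ℝ)
    (k : Fin n) (a b : Fin (δ k)) :
    ∑ g : (∀ k, Equiv.Perm (Fin (δ k))), (w k (g k a) - w k (g k b)) = 0 := by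
  classical
  have key : ∑ g : (∀ k, Equiv.Perm (Fin (δ k))), (w k (g k a) - w k (g k b))
      = ∑ g : (∀ k, Equiv.Perm (Fin (δ k))), (w k (g k b) - w k (g k a)) := by
    have h := Equiv.sum_comp
      (Equiv.mulRight (Pi.mulSingle k (Equiv.swap a b) : ∀ k, Equiv.Perm (Fin (δ k))))
      (fun g : ∀ k, Equiv.Perm (Fin (δ k)) => w k (g k a) - w k (g k b))
    rw [← h]
    refine Finset.sum_congr rfl fun g _ => ?_
    simp [Equiv.Perm.mul_apply]
  have hneg : ∑ g : (∀ k, Equiv.Perm (Fin (δ k))), (w k (g k b) - w k (g k a))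
      = - ∑ g : (∀ k, Equiv.Perm (Fin (δ k))), (w k (g k a) - w k (g k b)) := by
    rw [← Finset.sum_neg_distrib]
    simp [neg_sub]
  linarith [key, hneg]

/-- Reduction by symmetry: the optimal value of the full dual LP (with multipliers
`α_{k,l}` for the difference forms `e_{k,l}` and constraints indexed by all vertices
`v ∈ V'` of `R'`) equals the optimal value `d*` of the reduced dual LP (D̄), whose
constraints are indexed by the equivalence classes `v̄ ∈ V̄'` of vertices. -/
theorem stmt_9 {n mI mJ : ℕ} (δ : Fin n → ℕ) (hδ : ∀ k, 1 ≤ δ k)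
    (lo hi : Fin n → ℝ) (hlt : ∀ k, lo k < hi k)
    (p : (Fin n → ℝ) → ℝ) (q : (∀ k, Fin (δ k) → ℝ) → ℝ)
    (hqma : MultiAffineB δ q)
    (hqsym : ∀ z z' : ∀ k, Fin (δ k) → ℝ, BlockRel δ z z' → q z = q z')
    (hqdiag : ∀ x : Fin n → ℝ, q (fun k _ => x k) = p x)
    (a : Fin mI → Fin n → ℝ) (b : Fin mI → ℝ)
    (c : Fin mJ → Fin n → ℝ) (d : Fin mJ → ℝ)
    (hfeas : ∃ x : Fin n → ℝ, (∀ k, x k ∈ Set.Icc (lo k) (hi k)) ∧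
      (∀ i, dotp (a i) x ≤ b i) ∧ (∀ j, dotp (c j) x = d j)) :
    sSup {t : ℝ | ∃ (lam : Fin mI → ℝ) (mu : Fin mJ → ℝ)
        (alpha : ∀ k : Fin n, Fin (δ k - 1) → ℝ), (∀ i, 0 ≤ lam i) ∧
        ∀ v : ∀ k, Fin (δ k) → ℝ, (∀ k i, v k i = lo k ∨ v k i = hi k) →
          t ≤ q v + ∑ i, lam i * (aLift δ (a i) v - b i)
              + ∑ j, mu j * (aLift δ (c j) v - d j)
              + ∑ k, ∑ l : Fin (δ k - 1),
                  alpha k l * (v k ⟨l.1, by have := l.2; omega⟩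
                               - v k ⟨l.1 + 1, by have := l.2; omega⟩)}
    = sSup {t : ℝ | ∃ (lam : Fin mI → ℝ) (mu : Fin mJ → ℝ), (∀ i, 0 ≤ lam i) ∧
        ∀ ℓ : ∀ k, Fin (δ k + 1),
          t ≤ q (vrep δ lo hi ℓ) + ∑ i, lam i * (aLift δ (a i) (vrep δ lo hi ℓ) - b i)
              + ∑ j, mu j * (aLift δ (c j) (vrep δ lo hi ℓ) - d j)} := by
  classical
  have haux : ∀ (w : Fin n → ℝ) (g : ∀ k, Equiv.Perm (Fin (δ k)))
      (z : ∀ k, Fin (δ k) → ℝ),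
      aLift δ w (fun k i => z k (g k i)) = aLift δ w z :=
    fun w g z => aLift_blockRel δ w (fun k => ⟨g k, fun _ => rfl⟩)
  congr 1
  ext t
  simp only [Set.mem_setOf_eq]
  constructor
  · rintro ⟨lam, mu, alpha, hlam, hcon⟩
    refine ⟨lam, mu, hlam, fun ℓ => ?_⟩
    set w := vrep δ lo hi ℓ with hw
    set K : ℝ := q w + ∑ i, lam i * (aLift δ (a i) w - b i)
      + ∑ j, mu j * (aLift δ (c j) w - d j) with hK
    have hstep : ∀ g : ∀ k, Equiv.Perm (Fin (δ k)), t ≤ K + ∑ k, ∑ l : Fin (δ k - 1),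
        alpha k l * (w k (g k ⟨l.1, by have := l.2; omega⟩)
          - w k (g k ⟨l.1 + 1, by have := l.2; omega⟩)) := by
      intro g
      have hvtx : ∀ k i, (fun k i => w k (g k i)) k i = lo k
          ∨ (fun k i => w k (g k i)) k i = hi k := by
        intro k i
        simp only [hw, vrep]
        split
        · exact Or.inr rfl
        · exact Or.inl rfl
      have h1 := hcon (fun k i => w k (g k i)) hvtx
      have hq : q (fun k i => w k (g k i)) = q w :=
        hqsym _ _ (fun k => ⟨g k, fun _ => rfl⟩)
      simp only [hq, haux] at h1
      exact h1
    have hEzero : ∑ g : ∀ k, Equiv.Perm (Fin (δ k)), ∑ k, ∑ l : Fin (δ k - 1),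
        alpha k l * (w k (g k ⟨l.1, by have := l.2; omega⟩)
          - w k (g k ⟨l.1 + 1, by have := l.2; omega⟩)) = 0 := by
      rw [Finset.sum_comm]
      refine Finset.sum_eq_zero fun k _ => ?_
      rw [Finset.sum_comm]
      refine Finset.sum_eq_zero fun l _ => ?_
      rw [← Finset.mul_sum, sum_perm_diff_zero, mul_zero]
    have hsum := Finset.sum_le_sum
      (fun g (_ : g ∈ (Finset.univ : Finset (∀ k, Equiv.Perm (Fin (δ k))))) => hstep g)
    rw [Finset.sum_const, Finset.sum_add_distrib, hEzero, add_zero,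
      Finset.sum_const, Finset.card_univ, nsmul_eq_mul, nsmul_eq_mul] at hsum
    have hpos : (0 : ℝ) < (Fintype.card (∀ k, Equiv.Perm (Fin (δ k))) : ℝ) := by
      exact_mod_cast Fintype.card_pos
    exact le_of_mul_le_mul_left hsum hpos
  · rintro ⟨lam, mu, hlam, hcon⟩
    refine ⟨lam, mu, fun _ _ => 0, hlam, fun v hv => ?_⟩
    have hle : ∀ k, Fintype.card {i : Fin (δ k) // v k i = hi k} < δ k + 1 := by
      intro k
      have h1 := Fintype.card_subtype_le (fun i : Fin (δ k) => v k i = hi k)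
      simp only [Fintype.card_fin] at h1
      omega
    set ℓ : ∀ k, Fin (δ k + 1) := fun k =>
      ⟨Fintype.card {i : Fin (δ k) // v k i = hi k}, hle k⟩ with hℓ
    have hbr : BlockRel δ v (vrep δ lo hi ℓ) := by
      intro k
      have hcard1 : Fintype.card {i : Fin (δ k) // v k i = hi k}
          = Fintype.card {i : Fin (δ k) // (i : ℕ) < (ℓ k : ℕ)} := by
        rw [card_lt_subtype _ _ (by exact Nat.lt_succ_iff.mp (ℓ k).2)]
      have hcard2 : Fintype.card {i : Fin (δ k) // ¬ (v k i = hi k)}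
          = Fintype.card {i : Fin (δ k) // ¬ ((i : ℕ) < (ℓ k : ℕ))} := by
        rw [Fintype.card_subtype_compl, Fintype.card_subtype_compl, hcard1]
      refine ⟨Equiv.subtypeCongr (Fintype.equivOfCardEq hcard1)
        (Fintype.equivOfCardEq hcard2), fun i => ?_⟩
      by_cases hp : v k i = hi k
      · have hπ : (Equiv.subtypeCongr (Fintype.equivOfCardEq hcard1)
            (Fintype.equivOfCardEq hcard2) i : Fin (δ k))
            = (Fintype.equivOfCardEq hcard1 ⟨i, hp⟩ : Fin (δ k)) := by
          simp only [Equiv.subtypeCongr, Equiv.trans_apply, Equiv.sumCongr_apply]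
          rw [Equiv.sumCompl_symm_apply_of_pos (p := fun x : Fin (δ k) => v k x = hi k) (a := i) hp]
          simp
        rw [hπ, hp]
        have hq2 := (Fintype.equivOfCardEq hcard1 ⟨i, hp⟩).2
        simp only [vrep, if_pos hq2]
      · have hπ : (Equiv.subtypeCongr (Fintype.equivOfCardEq hcard1)
            (Fintype.equivOfCardEq hcard2) i : Fin (δ k))
            = (Fintype.equivOfCardEq hcard2 ⟨i, hp⟩ : Fin (δ k)) := by
          simp only [Equiv.subtypeCongr, Equiv.trans_apply, Equiv.sumCongr_apply]
          rw [Equiv.sumCompl_symm_apply_of_neg (p := fun x : Fin (δ k) => v k x = hi k) (a := i) hp]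
          simp
        rw [hπ, (hv k i).resolve_right hp]
        have hq2 := (Fintype.equivOfCardEq hcard2 ⟨i, hp⟩).2
        simp only [vrep, if_neg hq2]
    have h1 := hcon ℓ
    have hq : q v = q (vrep δ lo hi ℓ) := hqsym _ _ hbr
    have ha : ∀ w : Fin n → ℝ, aLift δ w v = aLift δ w (vrep δ lo hi ℓ) :=
      fun w => aLift_blockRel δ w hbr
    simp only [zero_mul, Finset.sum_const_zero, add_zero, hq, ha]
    exact h1
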